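/- Let S be a homeomorphism of a compact metric space, ν an S-invariant measure that G-shadows an S-ergodic measure μ via a factor map θ with μ-full set M₁, and assume that for each D ∈ G, θ^{-1}(M₁ ∩ D) ⊆ D. Then almost every measure in the ergodic decomposition of ν also G-shadows μ. -/

import Mathlib

open MeasureTheory
open scoped ENNReal

/-- The π-system generated by a countable family is countable. -/
lemma countable_generatePiSystem' {α : Type*} {S : Set (Set α)} (hS : S.Countable) :
    (generatePiSystem S).Countable := by
  have hsub : generatePiSystem S ⊆ Set.sInter '' {t : Set (Set α) | t.Finite ∧ t ⊆ S} := by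
    intro s hs
    induction hs with
    | base h =>
      exact ⟨{_}, ⟨Set.finite_singleton _, Set.singleton_subset_iff.2 h⟩, Set.sInter_singleton _⟩
    | inter hs ht _ ihs iht =>
      obtain ⟨u, ⟨hu1, hu2⟩, hu3⟩ := ihs
      obtain ⟨v, ⟨hv1, hv2⟩, hv3⟩ := iht
      exact ⟨u ∪ v, ⟨hu1.union hv1, Set.union_subset hu2 hv2⟩, by
        rw [Set.sInter_union, hu3, hv3]⟩
  exact ((Set.countable_setOf_finite_subset hS).image _).mono hsub

/-- An invariant probability measure absolutely continuous with respect to an ergodic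
probability measure coincides with it. -/
lemma eq_of_ergodic_of_absolutelyContinuous {Ω : Type*} [MetricSpace Ω]
    [mΩ : MeasurableSpace Ω] [BorelSpace Ω] (S : Ω ≃ₜ Ω) (μ ρ : Measure Ω)
    [IsProbabilityMeasure μ] [IsProbabilityMeasure ρ]
    (hμerg : Ergodic S μ) (hρinv : Measure.map S ρ = ρ) (hac : ρ ≪ μ) : ρ = μ := by
  set f : Ω → ℝ≥0∞ := ρ.rnDeriv μ with hf_def
  have hfmeas : Measurable f := Measure.measurable_rnDeriv ρ μ
  have hρwd : μ.withDensity f = ρ := Measure.withDensity_rnDeriv_eq ρ μ hac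
  have hSmeas : Measurable (S : Ω → Ω) := S.continuous.measurable
  have hSymm : Measurable (S.symm : Ω → Ω) := S.symm.continuous.measurable
  have hμinv : Measure.map S μ = μ := hμerg.toMeasurePreserving.map_eq
  -- withDensity μ (f ∘ S) = ρ
  have hwd2 : μ.withDensity (f ∘ S) = ρ := by
    refine Measure.ext fun C hC => ?_
    rw [withDensity_apply _ hC]
    have hCs : MeasurableSet ((S.symm : Ω → Ω) ⁻¹' C) := hSymm hC
    have h1 : ∫⁻ y in (S.symm : Ω → Ω) ⁻¹' C, f y ∂(Measure.map S μ)
        = ∫⁻ x in (S : Ω → Ω) ⁻¹' ((S.symm : Ω → Ω) ⁻¹' C), f (S x) ∂μ :=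
      setLIntegral_map hCs hfmeas hSmeas
    have hpre : (S : Ω → Ω) ⁻¹' ((S.symm : Ω → Ω) ⁻¹' C) = C := by
      ext x; simp
    rw [hμinv, hpre] at h1
    have h2 : ∫⁻ y in (S.symm : Ω → Ω) ⁻¹' C, f y ∂μ = ρ ((S.symm : Ω → Ω) ⁻¹' C) := by
      rw [← hρwd, withDensity_apply _ hCs]
    have h3 : ρ ((S.symm : Ω → Ω) ⁻¹' C) = ρ C := by
      conv_lhs => rw [← hρinv]
      rw [Measure.map_apply hSmeas hCs, hpre]
    calc ∫⁻ x in C, (f ∘ S) x ∂μ = ∫⁻ y in (S.symm : Ω → Ω) ⁻¹' C, f y ∂μ := h1.symm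
      _ = ρ C := by rw [h2, h3]
  -- hence f ∘ S =ᵐ[μ] f
  have hmass : ∀ (g : Ω → ℝ≥0∞), μ.withDensity g = ρ → ∫⁻ x, g x ∂μ ≠ ∞ := by
    intro g hg
    rw [← setLIntegral_univ, ← withDensity_apply _ MeasurableSet.univ, hg, measure_univ]
    exact ENNReal.one_ne_top
  have hfS : (f ∘ S) =ᵐ[μ] f := by
    refine (withDensity_eq_iff ((hfmeas.comp hSmeas).aemeasurable) hfmeas.aemeasurable
      (hmass _ hwd2)).mp ?_
    rw [hwd2, hρwd]
  obtain ⟨c, hc⟩ := hμerg.ae_eq_const_of_ae_eq_comp₀ hfmeas.nullMeasurable hfS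
  have hρc : ρ = c • μ := by
    rw [← hρwd, withDensity_congr_ae hc]
    exact withDensity_const c
  have hc1 : c = 1 := by
    have := congrArg (fun m : Measure Ω => m Set.univ) hρc
    simpa [measure_univ] using this.symm
  rw [hρc, hc1, one_smul]

/-- If `ν` `G`-shadows an `S`-ergodic measure `μ` via a factor map `θ` with `μ`-full set
`M₁` such that `θ⁻¹(M₁ ∩ D) ⊆ D` for each `D ∈ G`, then almost every measure in the
ergodic decomposition `χ` of `ν` also `G`-shadows `μ`. -/
theorem ergodic_decomposition_shadows
    {Ω : Type*} [MetricSpace Ω] [CompactSpace Ω] [mΩ : MeasurableSpace Ω] [BorelSpace Ω]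
    (S : Ω ≃ₜ Ω)
    (μ ν : Measure Ω) [IsProbabilityMeasure μ] [IsProbabilityMeasure ν]
    (hμinv : Measure.map S μ = μ) (hνinv : Measure.map S ν = ν)
    (hμerg : Ergodic S μ)
    (θ : Ω → Ω) (hθmeas : Measurable θ)
    (hθpush : Measure.map θ ν = μ)
    (hθequiv : θ ∘ S = S ∘ θ)
    (M₁ : Set Ω) (hM₁meas : MeasurableSet M₁) (hM₁ : μ M₁ = 1)
    (G : { m : MeasurableSpace Ω // m ≤ mΩ })
    (hshadow : ∀ D : Set Ω, MeasurableSet[G.1] D → ν D = μ D)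
    (hGsep : ∀ D : Set Ω, MeasurableSet[G.1] D → θ ⁻¹' (M₁ ∩ D) ⊆ D)
    -- `χ` is the ergodic decomposition of `ν`:
    (χ : Measure (Measure Ω)) [IsProbabilityMeasure χ]
    (hχerg : ∀ᵐ m ∂χ, IsProbabilityMeasure m ∧ Measure.map S m = m ∧ Ergodic S m)
    (hχrep : ∀ A : Set Ω, MeasurableSet A → ν A = ∫⁻ m, m A ∂χ) :
    ∀ᵐ m ∂χ, Measure.map θ m = μ ∧ ∀ D : Set Ω, MeasurableSet[G.1] D → m D = μ D := by
  have hSmeas : Measurable (S : Ω → Ω) := S.continuous.measurable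
  have hmapmeas : Measurable (Measure.map θ : Measure Ω → Measure Ω) :=
    Measure.measurable_map θ hθmeas
  -- Step 1: for each fixed Borel set A, χ-a.e. m gives mass μ A to θ⁻¹ A.
  have key : ∀ A : Set Ω, MeasurableSet A → ∀ᵐ m ∂χ, m (θ ⁻¹' A) = μ A := by
    intro A hA
    have hgmeas : Measurable (fun m : Measure Ω => m (θ ⁻¹' A)) :=
      Measure.measurable_coe (hθmeas hA)
    refine ae_eq_of_forall_setLIntegral_eq_of_sigmaFinite (μ := χ)
      hgmeas measurable_const fun E hE _ => ?_
    rw [setLIntegral_const]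
    rcases eq_or_ne (χ E) 0 with h0 | h0
    · rw [setLIntegral_measure_zero _ _ h0, h0, mul_zero]
    · have hEtop : χ E ≠ ∞ := (measure_lt_top χ E).ne
      -- the averaged measure over E
      set ρ : Measure Ω := (χ E)⁻¹ • Measure.bind (χ.restrict E) (Measure.map θ) with hρ_def
      have hρ_apply : ∀ B : Set Ω, MeasurableSet B →
          ρ B = (χ E)⁻¹ * ∫⁻ m in E, m (θ ⁻¹' B) ∂χ := by
        intro B hB
        rw [hρ_def, Measure.smul_apply, smul_eq_mul,
          Measure.bind_apply hB hmapmeas.aemeasurable]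
        congr 1
        exact lintegral_congr fun m => Measure.map_apply hθmeas hB
      have hErest : ∀ᵐ m ∂(χ.restrict E),
          IsProbabilityMeasure m ∧ Measure.map S m = m ∧ Ergodic S m :=
        ae_restrict_of_ae hχerg
      -- ρ is a probability measure
      haveI hρprob : IsProbabilityMeasure ρ := by
        constructor
        rw [hρ_apply Set.univ MeasurableSet.univ]
        have : ∫⁻ m in E, m (θ ⁻¹' Set.univ) ∂χ = ∫⁻ m in E, 1 ∂χ := by
          refine lintegral_congr_ae (hErest.mono fun m hm => ?_)
          haveI := hm.1
          simp
        rw [this, setLIntegral_one, ENNReal.inv_mul_cancel h0 hEtop]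
      -- ρ is S-invariant
      have hρinv : Measure.map S ρ = ρ := by
        refine Measure.ext fun B hB => ?_
        rw [Measure.map_apply hSmeas hB, hρ_apply _ (hSmeas hB), hρ_apply B hB]
        congr 1
        have hpre : θ ⁻¹' ((S : Ω → Ω) ⁻¹' B) = (S : Ω → Ω) ⁻¹' (θ ⁻¹' B) := by
          rw [← Set.preimage_comp, ← Set.preimage_comp, hθequiv]
        rw [hpre]
        refine lintegral_congr_ae (hErest.mono fun m hm => ?_)
        show m ((S : Ω → Ω) ⁻¹' (θ ⁻¹' B)) = m (θ ⁻¹' B)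
        conv_rhs => rw [← hm.2.1]
        rw [Measure.map_apply hSmeas (hθmeas hB)]
      -- ρ is absolutely continuous w.r.t. μ
      have hac : ρ ≪ μ := by
        refine Measure.AbsolutelyContinuous.mk fun B hB hμB => ?_
        have hle : ∫⁻ m in E, m (θ ⁻¹' B) ∂χ ≤ ∫⁻ m, m (θ ⁻¹' B) ∂χ :=
          lintegral_mono' Measure.restrict_le_self le_rfl
        have hν : ∫⁻ m, m (θ ⁻¹' B) ∂χ = 0 := by
          rw [← hχrep _ (hθmeas hB), ← Measure.map_apply hθmeas hB, hθpush, hμB]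
        rw [hρ_apply B hB]
        have : ∫⁻ m in E, m (θ ⁻¹' B) ∂χ = 0 := le_antisymm (hν ▸ hle) zero_le
        rw [this, mul_zero]
      have hρμ : ρ = μ := eq_of_ergodic_of_absolutelyContinuous S μ ρ hμerg hρinv hac
      have := hρ_apply A hA
      rw [hρμ] at this
      calc ∫⁻ m in E, m (θ ⁻¹' A) ∂χ
          = χ E * ((χ E)⁻¹ * ∫⁻ m in E, m (θ ⁻¹' A) ∂χ) := by
            rw [← mul_assoc, ENNReal.mul_inv_cancel h0 hEtop, one_mul]
        _ = μ A * χ E := by rw [← this, mul_comm]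
  -- Step 2: countable generating π-system
  have hPscount : (generatePiSystem (MeasurableSpace.countableGeneratingSet Ω)).Countable :=
    countable_generatePiSystem' (MeasurableSpace.countable_countableGeneratingSet)
  set Ps := generatePiSystem (MeasurableSpace.countableGeneratingSet Ω) with hPs
  have hPspi : IsPiSystem Ps := isPiSystem_generatePiSystem _
  have hPsgen : MeasurableSpace.generateFrom Ps = mΩ := by
    rw [hPs, generateFrom_generatePiSystem_eq,
      MeasurableSpace.generateFrom_countableGeneratingSet]
  have hPsmeas : ∀ A ∈ Ps, MeasurableSet A := by
    intro A hA
    rw [← hPsgen]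
    exact MeasurableSpace.measurableSet_generateFrom hA
  have hae : ∀ᵐ m ∂χ, ∀ A ∈ Ps, m (θ ⁻¹' A) = μ A :=
    (ae_ball_iff hPscount).mpr fun A hA => key A (hPsmeas A hA)
  -- Step 3: conclude
  filter_upwards [hχerg, hae] with m hm hmA
  obtain ⟨hmp, hminv, hmerg⟩ := hm
  haveI := hmp
  haveI : IsProbabilityMeasure (Measure.map θ m) :=
    Measure.isProbabilityMeasure_map hθmeas.aemeasurable
  have hmap : Measure.map θ m = μ := by
    refine ext_of_generate_finite Ps hPsgen.symm hPspi (fun A hA => ?_) (by simp)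
    rw [Measure.map_apply hθmeas (hPsmeas A hA)]
    exact hmA A hA
  refine ⟨hmap, fun D hD => ?_⟩
  have hlow : ∀ C : Set Ω, MeasurableSet[G.1] C → μ C ≤ m C := by
    intro C hC
    have hCm : MeasurableSet C := G.2 C hC
    have hM₁c : μ M₁ᶜ = 0 := by
      rw [prob_compl_eq_one_sub hM₁meas, hM₁, tsub_self]
    have h2 : μ (M₁ ∩ C) = μ C := by
      rw [Set.inter_comm]
      exact measure_inter_conull hM₁c
    have h1 : μ (M₁ ∩ C) = m (θ ⁻¹' (M₁ ∩ C)) := by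
      rw [← hmap, Measure.map_apply hθmeas (hM₁meas.inter hCm)]
    calc μ C = m (θ ⁻¹' (M₁ ∩ C)) := by rw [← h2, h1]
      _ ≤ m C := measure_mono (hGsep C hC)
  have hDm : MeasurableSet D := G.2 D hD
  have h1 : μ D ≤ m D := hlow D hD
  have h2 : μ Dᶜ ≤ m Dᶜ := hlow Dᶜ (MeasurableSet.compl (m := G.1) hD)
  -- from h2: m D ≤ μ D
  have h2' : (1 : ℝ≥0∞) - μ D ≤ 1 - m D := by
    rw [← prob_compl_eq_one_sub hDm, ← prob_compl_eq_one_sub hDm]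
    exact h2
  have h3 : (1 : ℝ≥0∞) ≤ (1 - m D) + μ D := tsub_le_iff_right.mp h2'
  have h4 : (1 - m D) + m D = 1 := tsub_add_cancel_of_le prob_le_one
  have h5 : (1 - m D) + m D ≤ (1 - m D) + μ D := h4.le.trans h3
  exact le_antisymm ((ENNReal.add_le_add_iff_left
    (ne_top_of_le_ne_top ENNReal.one_ne_top tsub_le_self)).mp h5) h1
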